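/- For any two matchgates U, U' there exist matchgates V, V' such that (U ⊗ I₂)·(I₂ ⊗ U')·e₀ = (I₂ ⊗ V)·(V' ⊗ I₂)·e₀, where e₀ ∈ ℂ⁸ is the standard basis vector |000⟩. Conversely, for any two matchgates V, V' there exist matchgates U, U' satisfying the same equality. (The left-right move for matchgates acting on the state |000⟩.) -/

import Mathlib

open Kronecker

/-- A matchgate: a 4×4 unitary `G(A,B)` built from 2×2 unitaries `A`, `B` with
`det A = det B`, where `A` acts on the even-parity subspace span{|00⟩,|11⟩} and
`B` on the odd-parity subspace span{|01⟩,|10⟩}. -/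
def IsMatchgate (G : Matrix (Fin 4) (Fin 4) ℂ) : Prop :=
  ∃ A B : Matrix (Fin 2) (Fin 2) ℂ,
    A ∈ Matrix.unitaryGroup (Fin 2) ℂ ∧ B ∈ Matrix.unitaryGroup (Fin 2) ℂ ∧
    A.det = B.det ∧
    G = !![A 0 0, 0,     0,     A 0 1;
           0,     B 0 0, B 0 1, 0;
           0,     B 1 0, B 1 1, 0;
           A 1 0, 0,     0,     A 1 1]

/-- A two-qubit gate applied to qubits (1,2) of three qubits (lexicographic ordering). -/
noncomputable def gate12 (U : Matrix (Fin 4) (Fin 4) ℂ) : Matrix (Fin 8) (Fin 8) ℂ :=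
  (Matrix.reindex (finProdFinEquiv.trans (finCongr (by norm_num)))
      (finProdFinEquiv.trans (finCongr (by norm_num))))
    (U ⊗ₖ (1 : Matrix (Fin 2) (Fin 2) ℂ))

/-- A two-qubit gate applied to qubits (2,3) of three qubits (lexicographic ordering). -/
noncomputable def gate23 (U : Matrix (Fin 4) (Fin 4) ℂ) : Matrix (Fin 8) (Fin 8) ℂ :=
  (Matrix.reindex (finProdFinEquiv.trans (finCongr (by norm_num)))
      (finProdFinEquiv.trans (finCongr (by norm_num))))
    ((1 : Matrix (Fin 2) (Fin 2) ℂ) ⊗ₖ U)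

/-- The state |000⟩ of three qubits. -/
def e0 : Fin 8 → ℂ := fun i => if i = 0 then 1 else 0

namespace MGaux

open Complex Matrix

/-- The matchgate matrix built from `A`, `B`. -/
def G (A B : Matrix (Fin 2) (Fin 2) ℂ) : Matrix (Fin 4) (Fin 4) ℂ :=
  !![A 0 0, 0,     0,     A 0 1;
     0,     B 0 0, B 0 1, 0;
     0,     B 1 0, B 1 1, 0;
     A 1 0, 0,     0,     A 1 1]

/-- A unitary with prescribed first column and determinant 1. -/
noncomputable def mkU (a c : ℂ) : Matrix (Fin 2) (Fin 2) ℂ :=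
  !![a, -(starRingEnd ℂ) c; c, (starRingEnd ℂ) a]

lemma mkU_conj_sum {a c : ℂ} (h : Complex.normSq a + Complex.normSq c = 1) :
    (starRingEnd ℂ) a * a + (starRingEnd ℂ) c * c = 1 := by
  have : ((Complex.normSq a + Complex.normSq c : ℝ) : ℂ) = 1 := by exact_mod_cast congrArg (fun r : ℝ => (r : ℂ)) h
  rw [Complex.ofReal_add, Complex.normSq_eq_conj_mul_self, Complex.normSq_eq_conj_mul_self] at this
  exact this

lemma mkU_mem {a c : ℂ} (h : Complex.normSq a + Complex.normSq c = 1) :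
    mkU a c ∈ Matrix.unitaryGroup (Fin 2) ℂ := by
  have h' := mkU_conj_sum h
  rw [Matrix.mem_unitaryGroup_iff']
  ext i j
  fin_cases i <;> fin_cases j <;>
    simp [mkU, Matrix.mul_apply, Fin.sum_univ_two, Matrix.star_apply, Matrix.one_apply] <;>
    ring_nf <;>
    linear_combination h'

lemma mkU_det {a c : ℂ} (h : Complex.normSq a + Complex.normSq c = 1) :
    (mkU a c).det = 1 := by
  have h' := mkU_conj_sum h
  simp [mkU, Matrix.det_fin_two]
  linear_combination h'

lemma isMatchgate_mk {a c b d : ℂ} (h1 : Complex.normSq a + Complex.normSq c = 1)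
    (h2 : Complex.normSq b + Complex.normSq d = 1) :
    IsMatchgate (G (mkU a c) (mkU b d)) :=
  ⟨mkU a c, mkU b d, mkU_mem h1, mkU_mem h2, by rw [mkU_det h1, mkU_det h2], rfl⟩

lemma isMatchgate_mk_one {a c : ℂ} (h1 : Complex.normSq a + Complex.normSq c = 1) :
    IsMatchgate (G (mkU a c) 1) :=
  ⟨mkU a c, 1, mkU_mem h1, Submonoid.one_mem _, by rw [mkU_det h1, Matrix.det_one], rfl⟩

/-- Norm of the first column of a 2×2 unitary. -/
lemma col0_norm {A : Matrix (Fin 2) (Fin 2) ℂ} (hA : A ∈ Matrix.unitaryGroup (Fin 2) ℂ) :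
    Complex.normSq (A 0 0) + Complex.normSq (A 1 0) = 1 := by
  rw [Matrix.mem_unitaryGroup_iff'] at hA
  have h00 : (star A * A) 0 0 = (1 : Matrix (Fin 2) (Fin 2) ℂ) 0 0 := by rw [hA]
  simp [Matrix.mul_apply, Fin.sum_univ_two, Matrix.star_apply, Matrix.one_apply] at h00
  have : ((Complex.normSq (A 0 0) + Complex.normSq (A 1 0) : ℝ) : ℂ) = 1 := by
    rw [Complex.ofReal_add, Complex.normSq_eq_conj_mul_self, Complex.normSq_eq_conj_mul_self]
    linear_combination h00
  exact_mod_cast this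

/-- Norm of the second column of a 2×2 unitary. -/
lemma col1_norm {A : Matrix (Fin 2) (Fin 2) ℂ} (hA : A ∈ Matrix.unitaryGroup (Fin 2) ℂ) :
    Complex.normSq (A 0 1) + Complex.normSq (A 1 1) = 1 := by
  rw [Matrix.mem_unitaryGroup_iff'] at hA
  have h11 : (star A * A) 1 1 = (1 : Matrix (Fin 2) (Fin 2) ℂ) 1 1 := by rw [hA]
  simp [Matrix.mul_apply, Fin.sum_univ_two, Matrix.star_apply, Matrix.one_apply] at h11
  have : ((Complex.normSq (A 0 1) + Complex.normSq (A 1 1) : ℝ) : ℂ) = 1 := by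
    rw [Complex.ofReal_add, Complex.normSq_eq_conj_mul_self, Complex.normSq_eq_conj_mul_self]
    linear_combination h11
  exact_mod_cast this

/-- Polar-type decomposition of a pair of complex numbers. -/
lemma decomp (p q : ℂ) :
    ∃ (r : ℝ) (a c : ℂ), Complex.normSq a + Complex.normSq c = 1 ∧
      (r : ℂ) * a = p ∧ (r : ℂ) * c = q ∧ r ^ 2 = Complex.normSq p + Complex.normSq q := by
  rcases eq_or_ne (Complex.normSq p + Complex.normSq q) 0 with h | h
  · have hp : p = 0 := by
      have := Complex.normSq_nonneg p
      have := Complex.normSq_nonneg q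
      have : Complex.normSq p = 0 := by linarith
      exact Complex.normSq_eq_zero.mp this
    have hq : q = 0 := by
      have := Complex.normSq_nonneg p
      have := Complex.normSq_nonneg q
      have : Complex.normSq q = 0 := by linarith
      exact Complex.normSq_eq_zero.mp this
    exact ⟨0, 1, 0, by simp, by simp [hp], by simp [hq], by simp [h]⟩
  · have hpos : 0 < Complex.normSq p + Complex.normSq q := by
      rcases lt_or_eq_of_le (add_nonneg (Complex.normSq_nonneg p) (Complex.normSq_nonneg q)) with h' | h'
      · exact h'
      · exact absurd h'.symm h
    set t := Real.sqrt (Complex.normSq p + Complex.normSq q) with ht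
    have ht2 : t ^ 2 = Complex.normSq p + Complex.normSq q := Real.sq_sqrt (le_of_lt hpos)
    have ht0 : t ≠ 0 := by
      intro h0
      rw [h0] at ht2
      simp at ht2
      exact h (by linarith)
    have htC : (t : ℂ) ≠ 0 := by exact_mod_cast ht0
    refine ⟨t, p / t, q / t, ?_, by field_simp, by field_simp, ht2⟩
    rw [Complex.normSq_div, Complex.normSq_div, Complex.normSq_ofReal]
    rw [← add_div]
    rw [show t * t = t ^ 2 by ring, ht2]
    field_simp

lemma lhs_vec (A B A' B' : Matrix (Fin 2) (Fin 2) ℂ) :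
    (gate12 (G A B) * gate23 (G A' B')).mulVec e0 =
      ![A 0 0 * A' 0 0, 0, 0, B 0 0 * A' 1 0, 0, B 1 0 * A' 1 0, A 1 0 * A' 0 0, 0] := by
  funext i
  fin_cases i <;>
    simp [gate12, gate23, G, e0, Matrix.mulVec, dotProduct, Matrix.mul_apply,
      Fin.sum_univ_eight, Matrix.one_apply, finProdFinEquiv, Fin.divNat, Fin.modNat,
      show ((0:Fin 8):ℕ)=0 from rfl, show ((1:Fin 8):ℕ)=1 from rfl,
      show ((2:Fin 8):ℕ)=2 from rfl, show ((3:Fin 8):ℕ)=3 from rfl,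
      show ((4:Fin 8):ℕ)=4 from rfl, show ((5:Fin 8):ℕ)=5 from rfl,
      show ((6:Fin 8):ℕ)=6 from rfl, show ((7:Fin 8):ℕ)=7 from rfl,
      Fin.mk_one, Fin.mk_zero,
      show (⟨2, by norm_num⟩ : Fin 4) = 2 from rfl, show (⟨3, by norm_num⟩ : Fin 4) = 3 from rfl] <;>
    rfl

lemma rhs_vec (C D E F : Matrix (Fin 2) (Fin 2) ℂ) :
    (gate23 (G C D) * gate12 (G E F)).mulVec e0 =
      ![C 0 0 * E 0 0, 0, 0, C 1 0 * E 0 0, 0, D 0 1 * E 1 0, D 1 1 * E 1 0, 0] := by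
  funext i
  fin_cases i <;>
    simp [gate12, gate23, G, e0, Matrix.mulVec, dotProduct, Matrix.mul_apply,
      Fin.sum_univ_eight, Matrix.one_apply, finProdFinEquiv, Fin.divNat, Fin.modNat,
      show ((0:Fin 8):ℕ)=0 from rfl, show ((1:Fin 8):ℕ)=1 from rfl,
      show ((2:Fin 8):ℕ)=2 from rfl, show ((3:Fin 8):ℕ)=3 from rfl,
      show ((4:Fin 8):ℕ)=4 from rfl, show ((5:Fin 8):ℕ)=5 from rfl,
      show ((6:Fin 8):ℕ)=6 from rfl, show ((7:Fin 8):ℕ)=7 from rfl,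
      Fin.mk_one, Fin.mk_zero,
      show (⟨2, by norm_num⟩ : Fin 4) = 2 from rfl, show (⟨3, by norm_num⟩ : Fin 4) = 3 from rfl] <;>
    rfl

end MGaux

/-- The left-right move for matchgates acting on |000⟩: for matchgates `U, U'`
there are matchgates `V, V'` with `(U ⊗ I)(I ⊗ U')|000⟩ = (I ⊗ V)(V' ⊗ I)|000⟩`,
and conversely. -/
theorem matchgate_left_right_move :
    (∀ U U' : Matrix (Fin 4) (Fin 4) ℂ, IsMatchgate U → IsMatchgate U' →
      ∃ V V' : Matrix (Fin 4) (Fin 4) ℂ, IsMatchgate V ∧ IsMatchgate V' ∧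
        (gate12 U * gate23 U').mulVec e0 = (gate23 V * gate12 V').mulVec e0) ∧
    (∀ V V' : Matrix (Fin 4) (Fin 4) ℂ, IsMatchgate V → IsMatchgate V' →
      ∃ U U' : Matrix (Fin 4) (Fin 4) ℂ, IsMatchgate U ∧ IsMatchgate U' ∧
        (gate12 U * gate23 U').mulVec e0 = (gate23 V * gate12 V').mulVec e0) := by
  open MGaux Complex in
  constructor
  · rintro U U' ⟨A, B, hA, hB, hdAB, rfl⟩ ⟨A', B', hA', hB', hdAB', rfl⟩
    set w := A 0 0 * A' 0 0 with hw
    set x := B 0 0 * A' 1 0 with hx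
    set y := B 1 0 * A' 1 0 with hy
    set z := A 1 0 * A' 0 0 with hz
    have cA := col0_norm hA
    have cB := col0_norm hB
    have cA' := col0_norm hA'
    have hsum : normSq w + normSq x + normSq y + normSq z = 1 := by
      rw [hw, hx, hy, hz]
      simp only [Complex.normSq_mul]
      linear_combination (normSq (A' 0 0)) * cA + (normSq (A' 1 0)) * cB + cA'
    obtain ⟨r, a, c, hac, hra, hrc, hr2⟩ := decomp w x
    obtain ⟨s, b, d, hbd, hsb, hsd, hs2⟩ := decomp y z
    have hrs : normSq (r:ℂ) + normSq (s:ℂ) = 1 := by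
      rw [Complex.normSq_ofReal, Complex.normSq_ofReal]
      nlinarith [hr2, hs2, hsum]
    have hbd' : normSq ((starRingEnd ℂ) d) + normSq (-(starRingEnd ℂ) b) = 1 := by
      rw [Complex.normSq_neg, Complex.normSq_conj, Complex.normSq_conj]
      linarith [hbd]
    refine ⟨MGaux.G (mkU a c) (mkU ((starRingEnd ℂ) d) (-(starRingEnd ℂ) b)),
            MGaux.G (mkU (r:ℂ) (s:ℂ)) 1,
            isMatchgate_mk hac hbd', isMatchgate_mk_one hrs, ?_⟩
    rw [show (!![A 0 0, 0, 0, A 0 1; 0, B 0 0, B 0 1, 0; 0, B 1 0, B 1 1, 0;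
          A 1 0, 0, 0, A 1 1] : Matrix (Fin 4) (Fin 4) ℂ) = MGaux.G A B from rfl,
        show (!![A' 0 0, 0, 0, A' 0 1; 0, B' 0 0, B' 0 1, 0; 0, B' 1 0, B' 1 1, 0;
          A' 1 0, 0, 0, A' 1 1] : Matrix (Fin 4) (Fin 4) ℂ) = MGaux.G A' B' from rfl,
        lhs_vec, rhs_vec]
    have e1 : mkU a c 0 0 * mkU (r:ℂ) (s:ℂ) 0 0 = A 0 0 * A' 0 0 := by
      simp [mkU]; linear_combination hra
    have e2 : mkU a c 1 0 * mkU (r:ℂ) (s:ℂ) 0 0 = B 0 0 * A' 1 0 := by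
      simp [mkU]; linear_combination hrc
    have e3 : mkU ((starRingEnd ℂ) d) (-(starRingEnd ℂ) b) 0 1 * mkU (r:ℂ) (s:ℂ) 1 0
        = B 1 0 * A' 1 0 := by
      simp [mkU]; linear_combination hsb
    have e4 : mkU ((starRingEnd ℂ) d) (-(starRingEnd ℂ) b) 1 1 * mkU (r:ℂ) (s:ℂ) 1 0
        = A 1 0 * A' 0 0 := by
      simp [mkU]; linear_combination hsd
    rw [e1, e2, e3, e4]
  · rintro V V' ⟨C, D, hC, hD, hdCD, rfl⟩ ⟨E, F, hE, hF, hdEF, rfl⟩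
    set w := C 0 0 * E 0 0 with hw
    set x := C 1 0 * E 0 0 with hx
    set y := D 0 1 * E 1 0 with hy
    set z := D 1 1 * E 1 0 with hz
    have cC := col0_norm hC
    have cD := col1_norm hD
    have cE := col0_norm hE
    have hsum : normSq w + normSq x + normSq y + normSq z = 1 := by
      rw [hw, hx, hy, hz]
      simp only [Complex.normSq_mul]
      linear_combination (normSq (E 0 0)) * cC + (normSq (E 1 0)) * cD + cE
    obtain ⟨r, a, c, hac, hra, hrc, hr2⟩ := decomp w z
    obtain ⟨s, b, d, hbd, hsb, hsd, hs2⟩ := decomp x y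
    have hrs : normSq (r:ℂ) + normSq (s:ℂ) = 1 := by
      rw [Complex.normSq_ofReal, Complex.normSq_ofReal]
      nlinarith [hr2, hs2, hsum]
    refine ⟨MGaux.G (mkU a c) (mkU b d), MGaux.G (mkU (r:ℂ) (s:ℂ)) 1,
            isMatchgate_mk hac hbd, isMatchgate_mk_one hrs, ?_⟩
    rw [show (!![C 0 0, 0, 0, C 0 1; 0, D 0 0, D 0 1, 0; 0, D 1 0, D 1 1, 0;
          C 1 0, 0, 0, C 1 1] : Matrix (Fin 4) (Fin 4) ℂ) = MGaux.G C D from rfl,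
        show (!![E 0 0, 0, 0, E 0 1; 0, F 0 0, F 0 1, 0; 0, F 1 0, F 1 1, 0;
          E 1 0, 0, 0, E 1 1] : Matrix (Fin 4) (Fin 4) ℂ) = MGaux.G E F from rfl,
        lhs_vec, rhs_vec]
    have e1 : mkU a c 0 0 * mkU (r:ℂ) (s:ℂ) 0 0 = C 0 0 * E 0 0 := by
      simp [mkU]; linear_combination hra
    have e2 : mkU b d 0 0 * mkU (r:ℂ) (s:ℂ) 1 0 = C 1 0 * E 0 0 := by
      simp [mkU]; linear_combination hsb
    have e3 : mkU b d 1 0 * mkU (r:ℂ) (s:ℂ) 1 0 = D 0 1 * E 1 0 := by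
      simp [mkU]; linear_combination hsd
    have e4 : mkU a c 1 0 * mkU (r:ℂ) (s:ℂ) 0 0 = D 1 1 * E 1 0 := by
      simp [mkU]; linear_combination hrc
    rw [e1, e2, e3, e4]
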